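/- For every α > 2: g_α(s) ≥ 0 for all s ∈ [−1,1], g_α(s) > 0 for all s ∈ (−1,1), and g_α(1) = g_α(−1) = 0. -/

import Mathlib

/-- `c_α = 1/tan(π/α)`. -/
noncomputable def cAlpha (α : ℝ) : ℝ := 1 / Real.tan (Real.pi / α)

/-- `r_α(s) = √(c_α² + 1 − s²) − c_α`. -/
noncomputable def rAlpha (α s : ℝ) : ℝ :=
  Real.sqrt (cAlpha α ^ 2 + 1 - s ^ 2) - cAlpha α

/-- `g_α(s) = −1 − s² + (2α/π)·r_α(s) + (2αs/π)·arctan(s/(r_α(s) + c_α))`. -/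
noncomputable def gAlpha (α s : ℝ) : ℝ :=
  -1 - s ^ 2 + 2 * α * rAlpha α s / Real.pi
    + 2 * α * s / Real.pi * Real.arctan (s / (rAlpha α s + cAlpha α))

open Real Set
lemma aux_a_pos {α : ℝ} (hα : 2 < α) : 0 < π / α := div_pos pi_pos (by linarith)
lemma aux_a_lt {α : ℝ} (hα : 2 < α) : π / α < π / 2 :=
  div_lt_div_of_pos_left pi_pos two_pos hα
lemma aux_tan_pos {α : ℝ} (hα : 2 < α) : 0 < Real.tan (π / α) :=
  Real.tan_pos_of_pos_of_lt_pi_div_two (aux_a_pos hα) (aux_a_lt hα)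
lemma aux_c_pos {α : ℝ} (hα : 2 < α) : 0 < cAlpha α :=
  one_div_pos.mpr (aux_tan_pos hα)
lemma aux_sub_pos {α : ℝ} (hα : 2 < α) {s : ℝ} (hs : s ^ 2 ≤ 1) :
    0 < cAlpha α ^ 2 + 1 - s ^ 2 := by
  have := aux_c_pos hα; nlinarith
lemma aux_sqrt_c {α : ℝ} (hα : 2 < α) :
    Real.sqrt (cAlpha α ^ 2 + 1) = 1 / Real.sin (π / α) := by
  have hs : 0 < Real.sin (π / α) :=
    Real.sin_pos_of_pos_of_lt_pi (aux_a_pos hα) (by linarith [aux_a_lt hα, pi_pos])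
  have hc : cAlpha α = Real.cos (π / α) / Real.sin (π / α) := by
    rw [cAlpha, Real.tan_eq_sin_div_cos, one_div_div]
  have h : cAlpha α ^ 2 + 1 = (1 / Real.sin (π / α)) ^ 2 := by
    rw [hc]; field_simp; linarith [Real.sin_sq_add_cos_sq (π / α)]
  rw [h, Real.sqrt_sq (by positivity)]

lemma aux_g_even {α : ℝ} (s : ℝ) : gAlpha α (-s) = gAlpha α s := by
  simp only [gAlpha, rAlpha, neg_sq, neg_div, Real.arctan_neg]
  ring

lemma aux_g_one {α : ℝ} (hα : 2 < α) : gAlpha α 1 = 0 := by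
  have hc := aux_c_pos hα
  have hr : rAlpha α 1 = 0 := by
    simp [rAlpha, Real.sqrt_sq hc.le]
  have harc : Real.arctan (1 / cAlpha α) = π / α := by
    rw [cAlpha, one_div_one_div,
      Real.arctan_tan (by linarith [aux_a_pos hα, pi_pos]) (aux_a_lt hα)]
  rw [gAlpha, hr]
  rw [zero_add, harc]
  have hπ := pi_pos
  field_simp
  ring

lemma aux_hasDerivAt {α : ℝ} (hα : 2 < α) {s : ℝ} (hs : s ^ 2 ≤ 1) :
    HasDerivAt (gAlpha α)
      (-2 * s + 2 * α / π * Real.arctan (s / Real.sqrt (cAlpha α ^ 2 + 1 - s ^ 2))) s := by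
  have hc := aux_c_pos hα
  have hπ := pi_pos
  set c := cAlpha α with hcdef
  have hsub : 0 < c ^ 2 + 1 - s ^ 2 := aux_sub_pos hα hs
  set R := Real.sqrt (c ^ 2 + 1 - s ^ 2) with hRdef
  have hR : 0 < R := Real.sqrt_pos.mpr hsub
  have hR2 : R ^ 2 = c ^ 2 + 1 - s ^ 2 := Real.sq_sqrt hsub.le
  have hgdef : gAlpha α = fun x : ℝ =>
      -1 - x ^ 2 + 2 * α * (Real.sqrt (c ^ 2 + 1 - x ^ 2) - c) / π
        + 2 * α * x / π * Real.arctan (x / Real.sqrt (c ^ 2 + 1 - x ^ 2)) := by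
    funext x
    simp [gAlpha, rAlpha, sub_add_cancel, hcdef]
  rw [hgdef]
  have hinner : HasDerivAt (fun x : ℝ => c ^ 2 + 1 - x ^ 2) (-(2 * s ^ 1)) s := by
    simpa using (hasDerivAt_pow 2 s).const_sub (c ^ 2 + 1)
  have hsqrt : HasDerivAt (fun x : ℝ => Real.sqrt (c ^ 2 + 1 - x ^ 2))
      (1 / (2 * R) * -(2 * s ^ 1)) s := by
    have := (Real.hasDerivAt_sqrt hsub.ne').comp s hinner
    simpa [Function.comp_def, hRdef] using this
  have hu : HasDerivAt (fun x : ℝ => x / Real.sqrt (c ^ 2 + 1 - x ^ 2))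
      ((1 * R - s * (1 / (2 * R) * -(2 * s ^ 1))) / R ^ 2) s := by
    have := (hasDerivAt_id s).div hsqrt hR.ne'
    simpa [hRdef, Pi.div_def] using this
  have harc : HasDerivAt (fun x : ℝ => Real.arctan (x / Real.sqrt (c ^ 2 + 1 - x ^ 2)))
      (1 / (1 + (s / R) ^ 2) * ((1 * R - s * (1 / (2 * R) * -(2 * s ^ 1))) / R ^ 2)) s := by
    have := hu.arctan
    simpa [hRdef] using this
  have h1 : HasDerivAt (fun x : ℝ => -1 - x ^ 2) (-(2 * s ^ 1)) s := by
    simpa using (hasDerivAt_pow 2 s).const_sub (-1 : ℝ)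
  have h2 : HasDerivAt (fun x : ℝ => 2 * α * (Real.sqrt (c ^ 2 + 1 - x ^ 2) - c) / π)
      (2 * α * (1 / (2 * R) * -(2 * s ^ 1)) / π) s :=
    ((hsqrt.sub_const c).const_mul (2 * α)).div_const π
  have h3 : HasDerivAt (fun x : ℝ => 2 * α * x / π) (2 * α / π) s := by
    have := ((hasDerivAt_id s).const_mul (2 * α)).div_const π
    simpa using this
  have h4 : HasDerivAt
      (fun x : ℝ => 2 * α * x / π * Real.arctan (x / Real.sqrt (c ^ 2 + 1 - x ^ 2)))
      (2 * α / π * Real.arctan (s / R)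
        + 2 * α * s / π *
          (1 / (1 + (s / R) ^ 2) * ((1 * R - s * (1 / (2 * R) * -(2 * s ^ 1))) / R ^ 2))) s := by
    have := h3.mul harc
    simpa [hRdef, Pi.mul_def] using this
  have htot := (h1.add h2).add h4
  refine htot.congr_deriv ?_
  have hden : (0:ℝ) < 1 + (s / R) ^ 2 := by positivity
  have hkey : 1 / (1 + (s / R) ^ 2) * ((1 * R - s * (1 / (2 * R) * -(2 * s ^ 1))) / R ^ 2)
      = 1 / R := by
    have he : 1 + (s / R) ^ 2 = (c ^ 2 + 1) / R ^ 2 := by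
      field_simp
      linarith [hR2]
    rw [he]
    field_simp
    linear_combination hR2
  rw [hkey]
  field_simp
  ring

lemma aux_arctan_lt {α : ℝ} (hα : 2 < α) {s : ℝ} (h0 : 0 < s) (h1 : s < 1) :
    Real.arctan (s / Real.sqrt (cAlpha α ^ 2 + 1 - s ^ 2)) < π / α * s := by
  have hc := aux_c_pos hα
  have hπ := pi_pos
  set a := π / α with hadef
  have ha0 : 0 < a := aux_a_pos hα
  have ha2 : a < π / 2 := aux_a_lt hα
  have hsin : 0 < Real.sin a := Real.sin_pos_of_pos_of_lt_pi ha0 (by linarith)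
  set c := cAlpha α with hcdef
  have hsub : 0 < c ^ 2 + 1 - s ^ 2 := aux_sub_pos hα (by nlinarith)
  set R := Real.sqrt (c ^ 2 + 1 - s ^ 2) with hRdef
  have hR : 0 < R := Real.sqrt_pos.mpr hsub
  have hR2 : R ^ 2 = c ^ 2 + 1 - s ^ 2 := Real.sq_sqrt hsub.le
  set θ := Real.arctan (s / R) with hθdef
  have hθ0 : 0 < θ := by
    have := Real.arctan_strictMono (show (0:ℝ) < s / R from div_pos h0 hR)
    simpa [hθdef] using this
  have hθ2 : θ < π / 2 := Real.arctan_lt_pi_div_two _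
  have hsinθ : Real.sin θ = s * Real.sin a := by
    rw [hθdef, Real.sin_arctan]
    have he : 1 + (s / R) ^ 2 = (c ^ 2 + 1) / R ^ 2 := by
      field_simp
      linarith [hR2]
    rw [he, Real.sqrt_div (by positivity) _, Real.sqrt_sq hR.le, aux_sqrt_c hα, ← hadef]
    field_simp [hR.ne', hsin.ne']
  have hθa : θ < a := by
    by_contra hcon
    push_neg at hcon
    have hmono := Real.strictMonoOn_sin.monotoneOn
      (⟨by linarith, by linarith⟩ : a ∈ Icc (-(π/2)) (π/2))
      (⟨by linarith, hθ2.le⟩ : θ ∈ Icc (-(π/2)) (π/2)) hcon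
    rw [hsinθ] at hmono
    nlinarith
  have hconc := strictConcaveOn_sin_Icc.2
    (show (0:ℝ) ∈ Icc 0 π from ⟨le_rfl, pi_pos.le⟩)
    (show a ∈ Icc 0 π from ⟨ha0.le, by linarith⟩)
    (ne_of_lt ha0)
    (show (0:ℝ) < 1 - θ / a by
      have : θ / a < 1 := (div_lt_one ha0).mpr hθa
      linarith)
    (show (0:ℝ) < θ / a from div_pos hθ0 ha0)
    (by ring)
  simp only [smul_eq_mul, Real.sin_zero, mul_zero, zero_add] at hconc
  rw [div_mul_cancel₀ θ ha0.ne'] at hconc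
  rw [hsinθ] at hconc
  -- hconc : θ / a * sin a < s * sin a
  have hlt : θ / a < s := by
    have := (mul_lt_mul_iff_left₀ hsin).mp hconc
    exact this
  calc θ = θ / a * a := by field_simp
  _ < s * a := by exact (mul_lt_mul_iff_left₀ ha0).mpr hlt
  _ = a * s := by ring

/-- For every `α > 2`: `g_α(s) ≥ 0` for all `s ∈ [−1,1]`,
`g_α(s) > 0` for all `s ∈ (−1,1)`, and `g_α(1) = g_α(−1) = 0`. -/
theorem gAlpha_nonneg_pos_and_zero_at_endpoints (α : ℝ) (hα : 2 < α) :
    (∀ s ∈ Set.Icc (-1 : ℝ) 1, 0 ≤ gAlpha α s) ∧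
    (∀ s ∈ Set.Ioo (-1 : ℝ) 1, 0 < gAlpha α s) ∧
    gAlpha α 1 = 0 ∧ gAlpha α (-1) = 0 := by
  have hπ := pi_pos
  have hg1 : gAlpha α 1 = 0 := aux_g_one hα
  have hgm1 : gAlpha α (-1) = 0 := by rw [aux_g_even 1]; exact hg1
  have hanti : StrictAntiOn (gAlpha α) (Icc 0 1) := by
    apply strictAntiOn_of_deriv_neg (convex_Icc 0 1)
    · intro x hx
      exact (aux_hasDerivAt hα
        (by nlinarith [hx.1, hx.2] : x ^ 2 ≤ 1)).continuousAt.continuousWithinAt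
    · intro x hx
      rw [interior_Icc] at hx
      have hx2 : x ^ 2 ≤ 1 := by nlinarith [hx.1, hx.2]
      rw [(aux_hasDerivAt hα hx2).deriv]
      have hlt := aux_arctan_lt hα hx.1 hx.2
      have h2α : (0:ℝ) < 2 * α / π := by positivity
      have hmul : 2 * α / π * Real.arctan (x / Real.sqrt (cAlpha α ^ 2 + 1 - x ^ 2))
          < 2 * α / π * (π / α * x) := (mul_lt_mul_iff_right₀ h2α).mpr hlt
      have heq : 2 * α / π * (π / α * x) = 2 * x := by
        field_simp
      nlinarith
  have hpos : ∀ s ∈ Ioo (-1:ℝ) 1, 0 < gAlpha α s := by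
    intro s hs
    rcases le_or_gt 0 s with h | h
    · have := hanti ⟨h, hs.2.le⟩ ⟨zero_le_one, le_rfl⟩ hs.2
      rw [hg1] at this
      exact this
    · have h1 : -s ∈ Icc (0:ℝ) 1 := ⟨by linarith, by linarith [hs.1]⟩
      have h2 : (-s : ℝ) < 1 := by linarith [hs.1]
      have := hanti h1 ⟨zero_le_one, le_rfl⟩ h2
      rw [hg1, aux_g_even s] at this
      exact this
  refine ⟨?_, hpos, hg1, hgm1⟩
  intro s hs
  rcases eq_or_lt_of_le hs.2 with h | h
  · rw [h, hg1]
  · rcases eq_or_lt_of_le hs.1 with h' | h'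
    · rw [← h', hgm1]
    · exact (hpos s ⟨h', h⟩).le
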